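/- Let q ≥ 2, m > 3, n = q^m - 1. For all integers x, y with 1 ≤ x, y < n and x·y < q^m - 1 - q^{⌊m/2⌋}, and for all l ∈ {0, 1, ..., m-1}: ((-x·q^l) mod n)·((-y·q^l) mod n) ≥ q^m - 1 - q^{⌊m/2⌋} when m is odd, and ≥ (q^{m/2} - 1)^2 when m is even. -/
import Mathlib

set_option maxHeartbeats 1600000
set_option maxHeartbeats 1600000

/-- R1 case of the core inequality lemma: `a = π + ρL` with `ρ ≥ 1`, second number `σ ≤ L-1`. -/
lemma coreR1 (L M S D D' a π ρ σ : ℤ)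
    (hL : 2 ≤ L) (hM2L : 2*L ≤ M)
    (hLS : L ≤ S) (hS : 1 ≤ S)
    (hb1 : L = 2 ∨ L*(L-1) ≤ (L-2)*(M-1))
    (hD : D ≤ L*M - 2 - S) (hD' : D' ≤ L*M - 1 - S)
    (ha : a = π + ρ*L)
    (hπ0 : 0 ≤ π) (hπ : π ≤ L-1) (hρ1 : 1 ≤ ρ) (hρ : ρ ≤ M-1)
    (hσ1 : 1 ≤ σ) (hσ : σ ≤ L-1)
    (haN : a ≤ L*M - 2)
    (hab : a*σ ≤ D) :
    D' ≤ ((L-1-π)*M + (M-1-ρ)) * ((L-1-σ)*M + (M-1)) := by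
  have hM4 : 4 ≤ M := by linarith
  have h2M : 2*M ≤ L*M := mul_le_mul_of_nonneg_right hL (by linarith)
  by_cases hπ2 : π ≤ L - 2
  · -- G(a) ≥ M, G(b) ≥ M - 1
    have g1 : M ≤ (L-1-π)*M + (M-1-ρ) := by nlinarith
    have g2 : M - 1 ≤ (L-1-σ)*M + (M-1) := by nlinarith
    have h3 : M * (M-1) ≤ ((L-1-π)*M + (M-1-ρ)) * ((L-1-σ)*M + (M-1)) :=
      mul_le_mul g1 g2 (by linarith) (by linarith)
    have h4 : (L+1)*M ≤ M*M := mul_le_mul_of_nonneg_right (by linarith) (by linarith)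
    nlinarith
  · have hπL : π = L - 1 := by omega
    set c := ρ + 1 with hc
    have hac : a = c*L - 1 := by rw [ha, hπL, hc]; ring
    have hc2 : 2 ≤ c := by omega
    have hcM : c ≤ M - 1 := by
      by_contra hh
      push_neg at hh
      have h1 : M ≤ c := by omega
      have h2 : M * L ≤ c * L := mul_le_mul_of_nonneg_right h1 (by linarith)
      nlinarith
    have hGa : (L-1-π)*M + (M-1-ρ) = M - c := by rw [hπL, hc]; ring
    rw [hGa]
    have hMc1 : 1 ≤ M - c := by omega
    rw [hac] at hab
    have hcb : c*σ ≤ M := by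
      have h1 : c*σ*L ≤ D + σ := by nlinarith
      have h2 : c*σ*L < (M+1)*L := by nlinarith
      have h3 : c*σ < M + 1 := lt_of_mul_lt_mul_right h2 (by linarith)
      omega
    by_cases hb1' : σ = 1
    · subst hb1'
      by_cases hc3 : c ≤ M - 3
      · have h4 : (0:ℤ) ≤ (L-1-1)*M + (M-1) := by nlinarith
        have h5 : 3*((L-1-1)*M + (M-1)) ≤ (M-c)*((L-1-1)*M + (M-1)) :=
          mul_le_mul_of_nonneg_right (by omega) h4
        nlinarith
      · have hcc : c = M - 1 ∨ c = M - 2 := by omega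
        rcases hcc with h | h
        · exfalso
          rw [h] at hab
          nlinarith
        · rw [h]
          nlinarith
    · have hσ2 : 2 ≤ σ := by omega
      have h2c : 2*c ≤ M := by nlinarith
      by_cases hbL2 : σ ≤ L - 2
      · have key0 : 2*(M-c) ≤ (L-σ)*(M-c) := mul_le_mul_of_nonneg_right (by omega) (by omega)
        have key : M ≤ (L-σ)*(M-c) := by linarith
        have key2 : M*M ≤ (L-σ)*(M-c)*M := mul_le_mul_of_nonneg_right key (by linarith)
        have e : (M-c)*((L-1-σ)*M + (M-1)) = (L-σ)*(M-c)*M - (M-c) := by ring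
        nlinarith
      · have hσL : σ = L - 1 := by omega
        have hL3 : 3 ≤ L := by omega
        have hb1'' : L*(L-1) ≤ (L-2)*(M-1) := by
          rcases hb1 with h | h
          · omega
          · exact h
        rw [hσL] at hcb
        have k1 : M*(L-2) ≤ (M-c)*(L-1) := by nlinarith
        have s1 : M*(L-2)*(M-1) ≤ (M-c)*(L-1)*(M-1) :=
          mul_le_mul_of_nonneg_right k1 (by linarith)
        have s2 : M*(L*(L-1)) ≤ M*((L-2)*(M-1)) :=
          mul_le_mul_of_nonneg_left hb1'' (by linarith)
        have k3 : L*M ≤ (M-c)*(M-1) := by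
          have k2 : L*M*(L-1) ≤ (M-c)*(M-1)*(L-1) := by nlinarith
          exact le_of_mul_le_mul_right k2 (by linarith : (0:ℤ) < L - 1)
        have e2 : (L-1-σ)*M + (M-1) = M - 1 := by rw [hσL]; ring
        rw [e2]
        nlinarith

/-- Core inequality lemma for `L < M` (with `M = E·L`). -/
lemma coreLT (L M E S D D' a b π ρ σ τ : ℤ)
    (hL : 2 ≤ L) (hM2L : 2*L ≤ M) (hE : M = E*L)
    (hLE3 : 3 ≤ (L-1)*(E-1))
    (hLS : L ≤ S) (hS : 1 ≤ S)
    (hb1 : L = 2 ∨ L*(L-1) ≤ (L-2)*(M-1))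
    (hD : D ≤ L*M - 2 - S) (hD' : D' ≤ L*M - 1 - S)
    (ha : a = π + ρ*L) (hbe : b = σ + τ*L)
    (hπ0 : 0 ≤ π) (hπ : π ≤ L-1) (hρ0 : 0 ≤ ρ) (hρ : ρ ≤ M-1)
    (hσ0 : 0 ≤ σ) (hσ : σ ≤ L-1) (hτ0 : 0 ≤ τ) (hτ : τ ≤ M-1)
    (ha1 : 1 ≤ a) (haN : a ≤ L*M - 2) (hb1' : 1 ≤ b) (hbN : b ≤ L*M - 2)
    (hab : a*b ≤ D) :
    D' ≤ ((L-1-π)*M + (M-1-ρ)) * ((L-1-σ)*M + (M-1-τ)) := by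
  have hM4 : 4 ≤ M := by linarith
  by_cases hρ1 : 1 ≤ ρ
  · by_cases hτ1 : 1 ≤ τ
    · -- R0 case
      have hE2 : 2 ≤ E := by
        by_contra hh
        push_neg at hh
        have h1 : E ≤ 1 := by omega
        have h2 : E*L ≤ 1*L := mul_le_mul_of_nonneg_right h1 (by linarith)
        linarith [hE ▸ h2]
      have h1 : ρ*L ≤ a := by linarith
      have h2 : τ*L ≤ b := by linarith
      have h3 : (ρ*L)*(τ*L) ≤ a*b :=
        mul_le_mul h1 h2 (by positivity) (by linarith)
      have hLM2 : L*M = E*(L*L) := by rw [hE]; ring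
      have h4 : ρ*τ ≤ E - 1 := by
        by_contra hh
        push_neg at hh
        have h5 : E ≤ ρ*τ := by omega
        have h6 : E*(L*L) ≤ (ρ*τ)*(L*L) := mul_le_mul_of_nonneg_right h5 (by positivity)
        nlinarith
      have gπ : (0:ℤ) ≤ (L-1-π)*M := mul_nonneg (by omega) (by linarith)
      have gσ : (0:ℤ) ≤ (L-1-σ)*M := mul_nonneg (by omega) (by linarith)
      have G1 : M-1-ρ ≤ (L-1-π)*M + (M-1-ρ) := by linarith
      have G2 : M-1-τ ≤ (L-1-σ)*M + (M-1-τ) := by linarith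
      have P1 : (M-1-ρ)*(M-1-τ) ≤ ((L-1-π)*M + (M-1-ρ)) * ((L-1-σ)*M + (M-1-τ)) :=
        mul_le_mul G1 G2 (by linarith) (by linarith)
      have P2 : (M-2)*(M-1-ρ*τ) ≤ (M-1-ρ)*(M-1-τ) := by
        nlinarith [mul_nonneg (mul_nonneg (show (0:ℤ) ≤ M-1 by linarith)
          (show (0:ℤ) ≤ ρ-1 by linarith)) (show (0:ℤ) ≤ τ-1 by linarith)]
      have P3 : (M-2)*(M-E) ≤ (M-2)*(M-1-ρ*τ) :=
        mul_le_mul_of_nonneg_left (by omega) (by linarith)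
      have P4 : (M-2)*(M-E) - L*M = M*((L-1)*(E-1) - 3) + 2*E := by rw [hE]; ring
      have P5 : (0:ℤ) ≤ M*((L-1)*(E-1) - 3) :=
        mul_nonneg (by linarith) (by linarith)
      linarith
    · have hτz : τ = 0 := by omega
      subst hτz
      have hbσ : b = σ := by rw [hbe]; ring
      simp only [sub_zero]
      exact coreR1 L M S D D' a π ρ σ hL hM2L hLS hS hb1 hD hD' ha hπ0 hπ hρ1 hρ
        (by omega) hσ haN (by rw [← hbσ]; exact hab)
  · have hρz : ρ = 0 := by omega
    subst hρz
    by_cases hτ1 : 1 ≤ τ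
    · have haπ : a = π := by rw [ha]; ring
      simp only [sub_zero]
      rw [mul_comm]
      exact coreR1 L M S D D' b σ τ π hL hM2L hLS hS hb1 hD hD' hbe hσ0 hσ hτ1 hτ
        (by omega) hπ hbN (by rw [← haπ, mul_comm]; exact hab)
    · -- both zero
      have hτz : τ = 0 := by omega
      subst hτz
      have gπ : (0:ℤ) ≤ (L-1-π)*M := mul_nonneg (by omega) (by linarith)
      have gσ : (0:ℤ) ≤ (L-1-σ)*M := mul_nonneg (by omega) (by linarith)
      have G1 : M - 1 ≤ (L-1-π)*M + (M-1-0) := by linarith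
      have G2 : M - 1 ≤ (L-1-σ)*M + (M-1-0) := by linarith
      have P : (M-1)*(M-1) ≤ ((L-1-π)*M + (M-1-0)) * ((L-1-σ)*M + (M-1-0)) :=
        mul_le_mul G1 G2 (by linarith) (by linarith)
      have h4 : (L+2)*M ≤ M*M := mul_le_mul_of_nonneg_right (by linarith) (by linarith)
      nlinarith

/-- R1 case for the `L = M = S` (even `m`, `l = m/2`) core lemma. -/
lemma coreEqR1 (S a π ρ σ : ℤ) (hS4 : 4 ≤ S)
    (ha : a = π + ρ*S)
    (hπ0 : 0 ≤ π) (hπ : π ≤ S-1) (hρ1 : 1 ≤ ρ) (hρ : ρ ≤ S-1)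
    (hσ1 : 1 ≤ σ) (hσ : σ ≤ S-1)
    (haN : a ≤ S*S - 2)
    (hab : a*σ ≤ S*S - S - 2) :
    (S-1)^2 ≤ ((S-1-π)*S + (S-1-ρ)) * ((S-1-σ)*S + (S-1)) := by
  by_cases hπ2 : π ≤ S - 2
  · have g1 : S ≤ (S-1-π)*S + (S-1-ρ) := by nlinarith
    have gσ : (0:ℤ) ≤ (S-1-σ)*S := mul_nonneg (by omega) (by linarith)
    have g2 : S - 1 ≤ (S-1-σ)*S + (S-1) := by linarith
    have h3 : S * (S-1) ≤ ((S-1-π)*S + (S-1-ρ)) * ((S-1-σ)*S + (S-1)) :=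
      mul_le_mul g1 g2 (by linarith) (by linarith)
    nlinarith
  · have hπL : π = S - 1 := by omega
    set c := ρ + 1 with hc
    have hac : a = c*S - 1 := by rw [ha, hπL, hc]; ring
    have hc2 : 2 ≤ c := by omega
    have hcM : c ≤ S - 1 := by
      by_contra hh
      push_neg at hh
      have h1 : S ≤ c := by omega
      have h2 : S*S ≤ c*S := mul_le_mul_of_nonneg_right h1 (by linarith)
      nlinarith
    have hGa : (S-1-π)*S + (S-1-ρ) = S - c := by rw [hπL, hc]; ring
    rw [hGa]
    rw [hac] at hab
    have hcb : c*σ ≤ S - 1 := by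
      have h1 : c*σ*S ≤ S*S - S - 2 + σ := by nlinarith
      have h2 : c*σ*S < S*S := by nlinarith
      have h3 : c*σ < S := by
        have := lt_of_mul_lt_mul_right h2 (by linarith : (0:ℤ) ≤ S)
        exact this
      omega
    by_cases hb1' : σ = 1
    · subst hb1'
      have hc3 : c ≤ S - 2 := by nlinarith
      have h4 : (0:ℤ) ≤ (S-1-1)*S + (S-1) := by nlinarith
      have h5 : 2*((S-1-1)*S + (S-1)) ≤ (S-c)*((S-1-1)*S + (S-1)) :=
        mul_le_mul_of_nonneg_right (by omega) h4
      nlinarith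
    · have hσ2 : 2 ≤ σ := by omega
      have h2c : 2*c ≤ S - 1 := by nlinarith
      have h2b : 2*σ ≤ S - 1 := by nlinarith
      have e1 : S + 1 ≤ 2*(S-c) := by omega
      have t0 : (S+1)*S ≤ 2*(S-σ)*S := mul_le_mul_of_nonneg_right (by omega) (by linarith)
      have t1 : (S+1)*S - 2 ≤ 2*((S-σ)*S - 1) := by linarith
      have t2 : (S+1)*((S+1)*S - 2) ≤ (2*(S-c))*(2*((S-σ)*S - 1)) :=
        mul_le_mul e1 t1 (by nlinarith) (by omega)
      have e3 : (S-1-σ)*S + (S-1) = (S-σ)*S - 1 := by ring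
      rw [e3]
      nlinarith [mul_nonneg (mul_nonneg (show (0:ℤ) ≤ S by linarith) (show (0:ℤ) ≤ S by linarith)) (show (0:ℤ) ≤ S - 2 by linarith)]

/-- Core lemma for the case `L = M = S` (m even, l = m/2). -/
lemma coreEq (S a b π ρ σ τ : ℤ) (hS4 : 4 ≤ S)
    (ha : a = π + ρ*S) (hb : b = σ + τ*S)
    (hπ0 : 0 ≤ π) (hπ : π ≤ S-1) (hρ0 : 0 ≤ ρ) (hρ : ρ ≤ S-1)
    (hσ0 : 0 ≤ σ) (hσ : σ ≤ S-1) (hτ0 : 0 ≤ τ) (hτ : τ ≤ S-1)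
    (ha1 : 1 ≤ a) (haN : a ≤ S*S - 2) (hb1 : 1 ≤ b) (hbN : b ≤ S*S - 2)
    (hab : a*b ≤ S*S - S - 2) :
    (S-1)^2 ≤ ((S-1-π)*S + (S-1-ρ)) * ((S-1-σ)*S + (S-1-τ)) := by
  by_cases hρ1 : 1 ≤ ρ
  · by_cases hτ1 : 1 ≤ τ
    · exfalso
      have h1 : S ≤ a := by
        have := le_mul_of_one_le_left (show (0:ℤ) ≤ S by linarith) hρ1
        linarith
      have h2 : S ≤ b := by
        have := le_mul_of_one_le_left (show (0:ℤ) ≤ S by linarith) hτ1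
        linarith
      have h3 : S*S ≤ a*b := mul_le_mul h1 h2 (by linarith) (by linarith)
      linarith
    · have hτz : τ = 0 := by omega
      subst hτz
      have hbσ : b = σ := by rw [hb]; ring
      simp only [sub_zero]
      exact coreEqR1 S a π ρ σ hS4 ha hπ0 hπ hρ1 hρ (by omega) hσ haN
        (by rw [← hbσ]; exact hab)
  · have hρz : ρ = 0 := by omega
    subst hρz
    by_cases hτ1 : 1 ≤ τ
    · have haπ : a = π := by rw [ha]; ring
      simp only [sub_zero]
      rw [mul_comm]
      exact coreEqR1 S b σ τ π hS4 hb hσ0 hσ hτ1 hτ (by omega) hπ hbN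
        (by rw [← haπ, mul_comm]; exact hab)
    · have hτz : τ = 0 := by omega
      subst hτz
      have gπ : (0:ℤ) ≤ (S-1-π)*S := mul_nonneg (by omega) (by linarith)
      have gσ : (0:ℤ) ≤ (S-1-σ)*S := mul_nonneg (by omega) (by linarith)
      have G1 : S - 1 ≤ (S-1-π)*S + (S-1-0) := by linarith
      have G2 : S - 1 ≤ (S-1-σ)*S + (S-1-0) := by linarith
      have P : (S-1)*(S-1) ≤ ((S-1-π)*S + (S-1-0)) * ((S-1-σ)*S + (S-1-0)) :=
        mul_le_mul G1 G2 (by linarith) (by linarith)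
      nlinarith

/-- The `l = 0` case: `(n-x)(n-y) ≥ B`. -/
lemma core0 (Qm S B x y : ℤ) (hQ : 16 ≤ Qm) (hS : 1 ≤ S) (hB : B ≤ Qm - 1 - S)
    (hx1 : 1 ≤ x) (hxN : x ≤ Qm - 2) (hy1 : 1 ≤ y) (hyN : y ≤ Qm - 2)
    (hxy : x*y ≤ Qm - 2 - S) :
    B ≤ (Qm - 1 - x)*(Qm - 1 - y) := by
  by_cases hx : x = 1
  · subst hx
    have h1 : (1:ℤ) ≤ Qm - 1 - y := by linarith
    have h2 : (Qm - 2) * 1 ≤ (Qm - 2) * (Qm - 1 - y) :=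
      mul_le_mul_of_nonneg_left h1 (by linarith)
    linarith
  · by_cases hy : y = 1
    · subst hy
      have h1 : (1:ℤ) ≤ Qm - 1 - x := by linarith
      have h2 : 1 * (Qm - 2) ≤ (Qm - 1 - x) * (Qm - 2) :=
        mul_le_mul_of_nonneg_right h1 (by linarith)
      linarith
    · have hx2 : 2 ≤ x := by omega
      have hy2 : 2 ≤ y := by omega
      have k1 : 2*y ≤ x*y := mul_le_mul_of_nonneg_right hx2 (by linarith)
      have k2 : 2*x ≤ x*y := by
        have := mul_le_mul_of_nonneg_left hy2 (show (0:ℤ) ≤ x by linarith)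
        linarith
      have h1 : 2 ≤ Qm - 1 - x := by linarith
      have h2 : Qm + S ≤ 2*(Qm - 1 - y) := by linarith
      have h3 : (0:ℤ) ≤ Qm - 1 - y := by linarith
      have h4 : 2*(Qm - 1 - y) ≤ (Qm - 1 - x)*(Qm - 1 - y) :=
        mul_le_mul_of_nonneg_right h1 h3
      linarith

/-- Decomposition of `(-x·q^l) mod (q^m - 1)`. -/
lemma decompose (q : ℤ) (hq : 2 ≤ q) (m l : ℕ) (hl : l ≤ m) (x : ℤ)
    (hx1 : 1 ≤ x) (hx2 : x ≤ q ^ m - 2) :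
    ∃ P R : ℤ, x = P * q ^ (m - l) + R ∧ 0 ≤ P ∧ P ≤ q ^ l - 1 ∧ 0 ≤ R ∧ R ≤ q ^ (m - l) - 1 ∧
      (-x * q ^ l) % (q ^ m - 1) = (q ^ l - 1 - P) + (q ^ (m - l) - 1 - R) * q ^ l ∧
      1 ≤ (q ^ l - 1 - P) + (q ^ (m - l) - 1 - R) * q ^ l ∧
      (q ^ l - 1 - P) + (q ^ (m - l) - 1 - R) * q ^ l ≤ q ^ m - 2 := by
  have hq0 : (0:ℤ) < q := by linarith
  have hLpos : (0:ℤ) < q ^ l := pow_pos hq0 l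
  have hMpos : (0:ℤ) < q ^ (m - l) := pow_pos hq0 (m - l)
  set L := q ^ l with hLdef
  set M := q ^ (m - l) with hMdef
  have hLM : L * M = q ^ m := by
    rw [hLdef, hMdef, ← pow_add]
    congr 1
    omega
  set P := x / M with hPdef
  set R := x % M with hRdef
  have hR0 : 0 ≤ R := Int.emod_nonneg x (ne_of_gt hMpos)
  have hRlt : R < M := Int.emod_lt_of_pos x hMpos
  have hxPR : x = P * M + R := by
    rw [hPdef, hRdef, mul_comm]
    exact (Int.mul_ediv_add_emod x M).symm
  have hP0 : 0 ≤ P := Int.ediv_nonneg (by linarith) (by linarith)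
  have hPlt : P < L := by
    rw [hPdef]
    exact (Int.ediv_lt_iff_lt_mul hMpos).mpr (by linarith)
  have hs1 : 1 ≤ P + R * L := by
    rcases eq_or_lt_of_le hR0 with h | h
    · have hPp : 1 ≤ P := by
        by_contra hh
        push_neg at hh
        have : P = 0 := by omega
        rw [this, ← h] at hxPR
        simp at hxPR
        omega
      nlinarith [mul_nonneg hR0 (le_of_lt hLpos)]
    · nlinarith
  have hsN : P + R * L ≤ q ^ m - 2 := by
    by_cases hPe : P ≤ L - 2
    · have h1 : R * L ≤ (M-1) * L := mul_le_mul_of_nonneg_right (by omega) (by linarith)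
      nlinarith
    · have hPE : P = L - 1 := by omega
      have hRe : R ≤ M - 2 := by
        by_contra hh
        push_neg at hh
        have hRE : R = M - 1 := by omega
        rw [hPE, hRE] at hxPR
        nlinarith
      have h1 : R * L ≤ (M-2) * L := mul_le_mul_of_nonneg_right hRe (by linarith)
      nlinarith
  set v := (L - 1 - P) + (M - 1 - R) * L with hvdef
  have hveq : v = L*M - 1 - (P + R*L) := by rw [hvdef]; ring
  have hv0 : 0 ≤ v := by linarith [hLM]
  have hvN : v ≤ q ^ m - 2 := by
    rw [hveq, hLM]
    linarith
  have hv1 : 1 ≤ v := by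
    rw [hveq, hLM]
    linarith
  have hn1 : (1:ℤ) < q ^ m - 1 := by nlinarith [hLM]
  have hkey : -x * L = v + (q ^ m - 1) * (-(P+1)) := by
    rw [hvdef, hxPR, ← hLM]
    ring
  have hmod : (-x * L) % (q ^ m - 1) = v := by
    rw [hkey, Int.add_mul_emod_self_left]
    exact Int.emod_eq_of_lt hv0 (by linarith)
  exact ⟨P, R, hxPR, hP0, by omega, hR0, by omega, hmod, hv1, hvN⟩

lemma hb1_help (q : ℤ) (hq : 2 ≤ q) (i : ℕ) (hi : 1 ≤ i) (L M : ℤ)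
    (hL : L = q^i) (hM : q*L ≤ M) : L = 2 ∨ L*(L-1) ≤ (L-2)*(M-1) := by
  have hq1 : (1:ℤ) ≤ q := by linarith
  have hLq : q ≤ L := by
    rw [hL]
    calc q = q^1 := (pow_one q).symm
    _ ≤ q^i := pow_le_pow_right₀ hq1 hi
  by_cases hq2 : q = 2
  · subst hq2
    by_cases hi1 : i = 1
    · left; rw [hL, hi1, pow_one]
    · right
      have hL4 : (4:ℤ) ≤ L := by
        rw [hL]
        calc (4:ℤ) = 2^2 := by norm_num
        _ ≤ 2^i := pow_le_pow_right₀ (by norm_num) (by omega)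
      have h1 : (L-2)*(2*L-1) ≤ (L-2)*(M-1) :=
        mul_le_mul_of_nonneg_left (by linarith) (by linarith)
      nlinarith [mul_nonneg (show (0:ℤ) ≤ L by linarith) (show (0:ℤ) ≤ L - 4 by linarith)]
  · have hq3 : 3 ≤ q := by omega
    have hL3 : (3:ℤ) ≤ L := by linarith
    right
    have hM3 : 3*L ≤ M := by nlinarith
    have h1 : (L-2)*(3*L-1) ≤ (L-2)*(M-1) :=
      mul_le_mul_of_nonneg_left (by linarith) (by linarith)
    nlinarith [mul_nonneg (show (0:ℤ) ≤ L by linarith) (show (0:ℤ) ≤ L - 3 by linarith)]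

lemma hLE3_help (q : ℤ) (hq : 2 ≤ q) (i j : ℕ) (hi : 1 ≤ i) (hj : 1 ≤ j)
    (hij : i = 1 → 2 ≤ j) (L E : ℤ) (hL : L = q^i) (hE : E = q^j) :
    3 ≤ (L-1)*(E-1) := by
  have hq1 : (1:ℤ) ≤ q := by linarith
  have hLq : q ≤ L := by
    rw [hL]; calc q = q^1 := (pow_one q).symm
    _ ≤ q^i := pow_le_pow_right₀ hq1 hi
  have hEq : q ≤ E := by
    rw [hE]; calc q = q^1 := (pow_one q).symm
    _ ≤ q^j := pow_le_pow_right₀ hq1 hj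
  by_cases hq2 : q = 2
  · subst hq2
    by_cases hi1 : i = 1
    · have hE4 : (4:ℤ) ≤ E := by
        rw [hE]
        calc (4:ℤ) = 2^2 := by norm_num
        _ ≤ 2^j := pow_le_pow_right₀ (by norm_num) (hij hi1)
      nlinarith
    · have hL4 : (4:ℤ) ≤ L := by
        rw [hL]
        calc (4:ℤ) = 2^2 := by norm_num
        _ ≤ 2^i := pow_le_pow_right₀ (by norm_num) (by omega)
      nlinarith
  · have hq3 : (3:ℤ) ≤ q := by omega
    nlinarith


/-- Key inequality: for 1 ≤ x, y < n = q^m - 1 with x·y < q^m - 1 - q^⌊m/2⌋ and any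
0 ≤ l ≤ m-1, the product ((-x·q^l) mod n)·((-y·q^l) mod n) is at least
q^m - 1 - q^⌊m/2⌋ when m is odd, and at least (q^{m/2} - 1)^2 when m is even. -/
theorem stmt_4 (q : ℤ) (hq : 2 ≤ q) (m : ℕ) (hm : 3 < m) :
    ∀ x y : ℤ, 1 ≤ x → x < q ^ m - 1 → 1 ≤ y → y < q ^ m - 1 →
      x * y < q ^ m - 1 - q ^ (m / 2) →
      ∀ l : ℕ, l ≤ m - 1 →
        ((-x * q ^ l) % (q ^ m - 1)) * ((-y * q ^ l) % (q ^ m - 1)) ≥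
          (if m % 2 = 1 then q ^ m - 1 - q ^ (m / 2) else (q ^ (m / 2) - 1) ^ 2) := by
  intro x y hx1 hxN hy1 hyN hxy l hl
  have hq1 : (1:ℤ) ≤ q := by linarith
  have hq0 : (0:ℤ) < q := by linarith
  have hlm : l ≤ m := by omega
  have hLpos : (0:ℤ) < q^l := pow_pos hq0 l
  have hMpos : (0:ℤ) < q^(m-l) := pow_pos hq0 (m-l)
  have hSpos : (0:ℤ) < q^(m/2) := pow_pos hq0 (m/2)
  have hLM : q^l * q^(m-l) = q^m := by rw [← pow_add]; congr 1; omega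
  have hS4 : (4:ℤ) ≤ q^(m/2) := by
    calc (4:ℤ) = 2^2 := by norm_num
    _ ≤ q^2 := pow_le_pow_left₀ (by norm_num) hq 2
    _ ≤ q^(m/2) := pow_le_pow_right₀ hq1 (by omega)
  have hQ16 : (16:ℤ) ≤ q^m := by
    calc (16:ℤ) = 2^4 := by norm_num
    _ ≤ q^4 := pow_le_pow_left₀ (by norm_num) hq 4
    _ ≤ q^m := pow_le_pow_right₀ hq1 (by omega)
  have hQSS : m % 2 = 0 → q^m = q^(m/2) * q^(m/2) := by
    intro hpar
    rw [← pow_add]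
    congr 1
    omega
  have hB : (if m % 2 = 1 then q^m - 1 - q^(m/2) else (q^(m/2) - 1)^2) ≤ q^m - 1 - q^(m/2) := by
    by_cases hm2 : m % 2 = 1
    · simp [hm2]
    · simp only [hm2, if_false]
      have := hQSS (by omega)
      nlinarith
  have hxy' : x*y ≤ q^m - 2 - q^(m/2) := by
    have := Int.lt_iff_add_one_le.mp hxy
    linarith
  rw [ge_iff_le]
  obtain ⟨P₁, R₁, hxe, hP₁0, hP₁, hR₁0, hR₁, hae, ha1, haN⟩ :=
    decompose q hq m l hlm x hx1 (by linarith)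
  obtain ⟨P₂, R₂, hye, hP₂0, hP₂, hR₂0, hR₂, hbe, hb1, hbN⟩ :=
    decompose q hq m l hlm y hy1 (by linarith)
  rw [hae, hbe]
  rcases Nat.eq_zero_or_pos l with hl0 | hl1
  · -- l = 0
    subst hl0
    simp only [pow_zero, Nat.sub_zero] at hxe hye hP₁ hP₂ hR₁ hR₂ ⊢
    have hP₁z : P₁ = 0 := by omega
    have hP₂z : P₂ = 0 := by omega
    have hR₁x : R₁ = x := by rw [hxe, hP₁z]; ring
    have hR₂y : R₂ = y := by rw [hye, hP₂z]; ring
    have hcore := core0 (q^m) (q^(m/2)) _ x y hQ16 (by linarith) hB hx1 (by linarith) hy1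
      (by linarith) hxy'
    calc (if m % 2 = 1 then q^m - 1 - q^(m/2) else (q^(m/2) - 1)^2)
        ≤ (q^m - 1 - x)*(q^m - 1 - y) := hcore
      _ = ((1 - 1 - P₁) + (q^m - 1 - R₁) * 1) * ((1 - 1 - P₂) + (q^m - 1 - R₂) * 1) := by
          rw [hP₁z, hP₂z, hR₁x, hR₂y]; ring
  · -- l ≥ 1
    have hL2 : (2:ℤ) ≤ q^l := by
      calc (2:ℤ) ≤ q := hq
      _ = q^1 := (pow_one q).symm
      _ ≤ q^l := pow_le_pow_right₀ hq1 hl1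
    have hM2 : (2:ℤ) ≤ q^(m-l) := by
      calc (2:ℤ) ≤ q := hq
      _ = q^1 := (pow_one q).symm
      _ ≤ q^(m-l) := pow_le_pow_right₀ hq1 (by omega)
    rcases lt_trichotomy (2*l) m with hc | hc | hc
    · -- 2l < m : contradiction route
      by_contra hcon
      push_neg at hcon
      have hab : ((q^l - 1 - P₁) + (q^(m-l) - 1 - R₁) * q^l) *
          ((q^l - 1 - P₂) + (q^(m-l) - 1 - R₂) * q^l) ≤
          (if m % 2 = 1 then q^m - 1 - q^(m/2) else (q^(m/2) - 1)^2) - 1 := by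
        have := Int.lt_iff_add_one_le.mp hcon
        linarith
      have hE : q^(m-l) = q^(m-2*l) * q^l := by rw [← pow_add]; congr 1; omega
      have h2L : 2*q^l ≤ q^(m-l) := by
        have h1 : q * q^l ≤ q^(m-l) := by
          rw [← pow_succ']
          exact pow_le_pow_right₀ hq1 (by omega)
        nlinarith
      have hLS : q^l ≤ q^(m/2) := pow_le_pow_right₀ hq1 (by omega)
      have hBD : (if m % 2 = 1 then q^m - 1 - q^(m/2) else (q^(m/2) - 1)^2) - 1 ≤
          q^l * q^(m-l) - 2 - q^(m/2) := by
        rw [hLM]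
        by_cases hm2 : m % 2 = 1
        · rw [if_pos hm2]
          linarith
        · rw [if_neg hm2]
          have := hQSS (by omega)
          nlinarith
      have hout := coreLT (q^l) (q^(m-l)) (q^(m-2*l)) (q^(m/2))
        ((if m % 2 = 1 then q^m - 1 - q^(m/2) else (q^(m/2) - 1)^2) - 1)
        (q^m - 1 - q^(m/2))
        ((q^l - 1 - P₁) + (q^(m-l) - 1 - R₁) * q^l)
        ((q^l - 1 - P₂) + (q^(m-l) - 1 - R₂) * q^l)
        (q^l - 1 - P₁) (q^(m-l) - 1 - R₁) (q^l - 1 - P₂) (q^(m-l) - 1 - R₂)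
        hL2 h2L hE
        (hLE3_help q hq l (m-2*l) hl1 (by omega) (by intro h; omega) (q^l) (q^(m-2*l)) rfl rfl)
        hLS (by linarith)
        (hb1_help q hq l hl1 (q^l) (q^(m-l)) rfl (by
          have h1 : q * q^l ≤ q^(m-l) := by
            rw [← pow_succ']
            exact pow_le_pow_right₀ hq1 (by omega)
          linarith))
        hBD (by rw [hLM])
        rfl rfl
        (by linarith) (by linarith) (by linarith) (by linarith)
        (by linarith) (by linarith) (by linarith) (by linarith)
        ha1 (by rw [hLM]; linarith) hb1 (by rw [hLM]; linarith)
        hab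
      have hfin : q^m - 1 - q^(m/2) ≤ x*y := by
        have heq : ((q^l-1-(q^l-1-P₁))*q^(m-l) + (q^(m-l)-1-(q^(m-l)-1-R₁))) *
            ((q^l-1-(q^l-1-P₂))*q^(m-l) + (q^(m-l)-1-(q^(m-l)-1-R₂))) = x*y := by
          rw [hxe, hye]; ring
        rw [heq] at hout
        exact hout
      linarith
    · -- 2l = m
      have hml : m - l = l := by omega
      have hkl : m / 2 = l := by omega
      rw [if_neg (by omega), hkl]
      rw [hml] at hxe hye hR₁ hR₂ ⊢
      have hq2 : q^l * q^l = q^m := by rw [← pow_add]; congr 1; omega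
      have hS4' : (4:ℤ) ≤ q^l := by rw [← hkl]; exact hS4
      have hxyl : x*y ≤ q^l*q^l - q^l - 2 := by
        have h1 : x*y ≤ q^m - 2 - q^(m/2) := hxy'
        rw [hkl, ← hq2] at h1
        linarith
      have hout := coreEq (q^l) x y R₁ P₁ R₂ P₂ hS4'
        (by rw [hxe]; ring) (by rw [hye]; ring)
        hR₁0 hR₁ hP₁0 hP₁ hR₂0 hR₂ hP₂0 hP₂
        hx1 (by rw [hq2]; linarith) hy1 (by rw [hq2]; linarith)
        hxyl
      calc (q^l - 1)^2
          ≤ ((q^l-1-R₁)*q^l + (q^l-1-P₁)) * ((q^l-1-R₂)*q^l + (q^l-1-P₂)) := hout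
        _ = ((q^l - 1 - P₁) + (q^l - 1 - R₁) * q^l) *
            ((q^l - 1 - P₂) + (q^l - 1 - R₂) * q^l) := by ring
    · -- 2l > m : direct route
      have hE : q^l = q^(2*l-m) * q^(m-l) := by rw [← pow_add]; congr 1; omega
      have h2L : 2*q^(m-l) ≤ q^l := by
        have h1 : q * q^(m-l) ≤ q^l := by
          rw [← pow_succ']
          exact pow_le_pow_right₀ hq1 (by omega)
        nlinarith
      have hLS : q^(m-l) ≤ q^(m/2) := pow_le_pow_right₀ hq1 (by omega)
      have hMLm : q^(m-l) * q^l = q^m := by rw [← pow_add]; congr 1; omega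
      have hout := coreLT (q^(m-l)) (q^l) (q^(2*l-m)) (q^(m/2))
        (q^m - 2 - q^(m/2))
        (if m % 2 = 1 then q^m - 1 - q^(m/2) else (q^(m/2) - 1)^2)
        x y R₁ P₁ R₂ P₂
        hM2 h2L hE
        (hLE3_help q hq (m-l) (2*l-m) (by omega) (by omega) (by intro h; omega) (q^(m-l)) (q^(2*l-m)) rfl rfl)
        hLS (by linarith)
        (hb1_help q hq (m-l) (by omega) (q^(m-l)) (q^l) rfl (by
          have h1 : q * q^(m-l) ≤ q^l := by
            rw [← pow_succ']
            exact pow_le_pow_right₀ hq1 (by omega)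
          linarith))
        (by rw [hMLm]) (by rw [hMLm]; exact hB)
        (by rw [hxe]; ring) (by rw [hye]; ring)
        hR₁0 hR₁ hP₁0 hP₁ hR₂0 hR₂ hP₂0 hP₂
        hx1 (by rw [hMLm]; linarith) hy1 (by rw [hMLm]; linarith)
        hxy'
      calc (if m % 2 = 1 then q^m - 1 - q^(m/2) else (q^(m/2) - 1)^2)
          ≤ ((q^(m-l)-1-R₁)*q^l + (q^l-1-P₁)) * ((q^(m-l)-1-R₂)*q^l + (q^l-1-P₂)) := hout
        _ = ((q^l - 1 - P₁) + (q^(m-l) - 1 - R₁) * q^l) *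
            ((q^l - 1 - P₂) + (q^(m-l) - 1 - R₂) * q^l) := by ring
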